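/- arXiv:2404.06843 — 4 statements merged into one kernel-verified Lean document; each statement's English description precedes it below -/
import Mathlib

section
/- Let G be a connected finite simple graph with m edges that is H_7-free, let x be a Perron vector of G and u* a vertex at which x attains its maximum. Set A = N(u*) and B = V(G) \ (A ∪ {u*}). If ρ(G)² − 2ρ(G) ≥ m − 3, then e(B) ≤ 3. -/
open Matrix Finset

/-- The spectral radius of a finite simple graph: the largest (real) eigenvalue of its
adjacency matrix, expressed as the supremum of the set of real eigenvalues. -/
noncomputable def specRad {V : Type*} [Fintype V] (G : SimpleGraph V)
    [DecidableRel G.Adj] : ℝ :=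
  sSup {t : ℝ | ∃ x : V → ℝ, x ≠ 0 ∧ (G.adjMatrix ℝ) *ᵥ x = t • x}

/-- `H` is contained in `G` as a (not necessarily induced) subgraph. -/
def ContainsSub {α β : Type*} (H : SimpleGraph α) (G : SimpleGraph β) : Prop :=
  ∃ f : α → β, Function.Injective f ∧ ∀ ⦃a b⦄, H.Adj a b → G.Adj (f a) (f b)

/-- The fan graph `H₇ = K₁ ∨ P₆`: vertex `6` is joined to every vertex of the
path `0-1-2-3-4-5`. -/
def fanH7 : SimpleGraph (Fin 7) :=
  SimpleGraph.fromRel (fun i j => i = 6 ∨ j = 6 ∨ (j : ℕ) = (i : ℕ) + 1)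

/-- A graph is `H₇`-free if it contains no subgraph isomorphic to the fan `H₇`. -/
def H7Free {β : Type*} (G : SimpleGraph β) : Prop := ¬ ContainsSub fanH7 G

/-- `K₃ ∨ kK₁`: the join of a triangle (vertices `0,1,2`) with `k` isolated vertices. -/
def K3Join (k : ℕ) : SimpleGraph (Fin (k + 3)) :=
  SimpleGraph.fromRel (fun i j => (i : ℕ) < 3 ∨ (j : ℕ) < 3)

instance (k : ℕ) : DecidableRel (K3Join k).Adj := fun a b =>
  decidable_of_iff (a ≠ b ∧ ((a : ℕ) < 3 ∨ (b : ℕ) < 3)) (by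
    rw [K3Join, SimpleGraph.fromRel_adj]; tauto)

/-- `K₂ ∨ tK₁`: the join of an edge (vertices `0,1`) with `t` isolated vertices. -/
def K2Join (t : ℕ) : SimpleGraph (Fin (t + 2)) :=
  SimpleGraph.fromRel (fun i j => (i : ℕ) < 2 ∨ (j : ℕ) < 2)

/-- The star `K_{1,s}`: vertex `0` joined to `s` independent vertices. -/
def starGraph (s : ℕ) : SimpleGraph (Fin (s + 1)) :=
  SimpleGraph.fromRel (fun i j => i = 0 ∨ j = 0)

/-- `K₁ ∨ (K₃ ∪ tK₁)`: vertex `0` joined to all of a triangle `1,2,3` and to `t`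
further vertices which are otherwise isolated. -/
def K1JoinK3Union (t : ℕ) : SimpleGraph (Fin (t + 4)) :=
  SimpleGraph.fromRel (fun i j => i = 0 ∨ j = 0 ∨ ((i : ℕ) ≤ 3 ∧ (j : ℕ) ≤ 3))

/-- `C₆^△`: a 6-cycle `0-1-2-3-4-5-0` plus a vertex `6` adjacent to the two adjacent
cycle vertices `0` and `1`. -/
def C6Tri : SimpleGraph (Fin 7) :=
  SimpleGraph.fromRel (fun i j =>
    ((i : ℕ) < 6 ∧ (j : ℕ) = ((i : ℕ) + 1) % 6) ∨ (i = 6 ∧ (j = 0 ∨ j = 1)))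

/-- `F₃`: three triangles `{0,1,2}`, `{0,3,4}`, `{0,5,6}` sharing the common vertex `0`. -/
def friendshipF3 : SimpleGraph (Fin 7) :=
  SimpleGraph.fromRel (fun i j =>
    i = 0 ∨ j = 0 ∨ ((j : ℕ) = (i : ℕ) + 1 ∧ (i : ℕ) % 2 = 1))

/-- The number of edges of `G` with both end vertices in `S`. -/
noncomputable def edgesIn {V : Type*} (G : SimpleGraph V) (S : Set V) : ℕ :=
  {e ∈ G.edgeSet | ∀ v ∈ e, v ∈ S}.ncard

set_option linter.unusedSectionVars false
set_option linter.unusedVariables false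
set_option maxHeartbeats 1000000

section AuxStatement11

variable {V : Type} [DecidableEq V]

lemma chain5 {G : SimpleGraph V} {a b c d e : V} (h1 : G.Adj a b) (h2 : G.Adj b c)
    (h3 : G.Adj c d) (h4 : G.Adj d e) : ([a,b,c,d,e] : List V).Chain' G.Adj :=
  List.isChain_cons_cons.2 ⟨h1, List.isChain_cons_cons.2 ⟨h2, List.isChain_cons_cons.2 ⟨h3,
    List.isChain_cons_cons.2 ⟨h4, List.isChain_singleton _⟩⟩⟩⟩

lemma chain6 {G : SimpleGraph V} {a b c d e f : V} (h1 : G.Adj a b) (h2 : G.Adj b c)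
    (h3 : G.Adj c d) (h4 : G.Adj d e) (h5 : G.Adj e f) :
    ([a,b,c,d,e,f] : List V).Chain' G.Adj :=
  List.isChain_cons_cons.2 ⟨h1, chain5 h2 h3 h4 h5⟩

lemma nodup5 {a b c d e : V} (h1 : a ≠ b) (h2 : a ≠ c) (h3 : a ≠ d) (h4 : a ≠ e)
    (h5 : b ≠ c) (h6 : b ≠ d) (h7 : b ≠ e) (h8 : c ≠ d) (h9 : c ≠ e) (h10 : d ≠ e) :
    ([a,b,c,d,e] : List V).Nodup := by
  simp [h1,h2,h3,h4,h5,h6,h7,h8,h9,h10]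

lemma nodup6 {a b c d e f : V} (h1 : a ≠ b) (h2 : a ≠ c) (h3 : a ≠ d) (h4 : a ≠ e)
    (h5 : a ≠ f) (h6 : b ≠ c) (h7 : b ≠ d) (h8 : b ≠ e) (h9 : b ≠ f) (h10 : c ≠ d)
    (h11 : c ≠ e) (h12 : c ≠ f) (h13 : d ≠ e) (h14 : d ≠ f) (h15 : e ≠ f) :
    ([a,b,c,d,e,f] : List V).Nodup := by
  simp [h1,h2,h3,h4,h5,h6,h7,h8,h9,h10,h11,h12,h13,h14,h15]

lemma mem5 {A : Finset V} {a b c d e : V} (ha : a ∈ A) (hb : b ∈ A) (hc : c ∈ A)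
    (hd : d ∈ A) (he : e ∈ A) : ∀ v ∈ ([a,b,c,d,e] : List V), v ∈ A := by
  intro v hv
  simp at hv
  rcases hv with rfl | rfl | rfl | rfl | rfl <;> assumption

lemma mem6 {A : Finset V} {a b c d e f : V} (ha : a ∈ A) (hb : b ∈ A) (hc : c ∈ A)
    (hd : d ∈ A) (he : e ∈ A) (hf : f ∈ A) : ∀ v ∈ ([a,b,c,d,e,f] : List V), v ∈ A := by
  intro v hv
  simp at hv
  rcases hv with rfl | rfl | rfl | rfl | rfl | rfl <;> assumption

/-- `PP G A v₀ l`: `l` is a path in `A` through `v₀`. -/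
def PP (G : SimpleGraph V) (A : Finset V) (v₀ : V) (l : List V) : Prop :=
  l.Chain' G.Adj ∧ l.Nodup ∧ (∀ v ∈ l, v ∈ A) ∧ v₀ ∈ l

lemma auxNoBig {G : SimpleGraph V} [DecidableRel G.Adj]
    (A : Finset V)
    (hno : ∀ l : List V, l.Chain' G.Adj → l.Nodup → (∀ v ∈ l, v ∈ A) → l.length ≤ 5)
    (hmin : ∀ v ∈ A, (A.filter (G.Adj v)).card = 0 ∨ 3 ≤ (A.filter (G.Adj v)).card)
    (v₀ : V) (hv₀ : v₀ ∈ A) (h5 : 5 ≤ (A.filter (G.Adj v₀)).card) : False := by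
  classical
  have hbound : ∀ l, PP G A v₀ l → l.length ≤ 5 := fun l hl => hno l hl.1 hl.2.1 hl.2.2.1
  have hone : PP G A v₀ [v₀] :=
    ⟨List.isChain_singleton _, List.nodup_singleton _, by simpa using hv₀, by simp⟩
  let S : Finset ℕ := (Finset.range 6).filter (fun n => ∃ l, PP G A v₀ l ∧ l.length = n)
  have hSne : S.Nonempty := ⟨1, Finset.mem_filter.2 ⟨by norm_num, [v₀], hone, rfl⟩⟩
  set t := S.max' hSne with ht
  have hmaxl : ∀ l, PP G A v₀ l → l.length ≤ t := by
    intro l hl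
    exact S.le_max' _ (Finset.mem_filter.2
      ⟨Finset.mem_range.2 (by have := hbound l hl; omega), l, hl, rfl⟩)
  obtain ⟨-, l, hPl, hlen⟩ := Finset.mem_filter.1 (S.max'_mem hSne)
  have hfind : ∀ (s : Finset V), s.card ≤ 4 → ∃ u, u ∈ A ∧ G.Adj v₀ u ∧ u ∉ s := by
    intro s hs
    by_contra h
    push_neg at h
    have hsub : A.filter (G.Adj v₀) ⊆ s := by
      intro u hu
      rcases Finset.mem_filter.1 hu with ⟨h1, h2⟩
      exact h u h1 h2
    have := Finset.card_le_card hsub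
    omega
  have hHead : ∀ (a : V) (l1 : List V), PP G A v₀ (a :: l1) → (a :: l1).length = t →
      ∀ u, u ∈ A → G.Adj a u → u ∈ a :: l1 := by
    intro a l1 hPl1 hlt u huA hadj
    by_contra hul
    have hP2 : PP G A v₀ (u :: a :: l1) :=
      ⟨List.isChain_cons_cons.2 ⟨hadj.symm, hPl1.1⟩, List.nodup_cons.2 ⟨hul, hPl1.2.1⟩,
        by
          intro v hv
          rcases List.mem_cons.1 hv with rfl | hv
          · exact huA
          · exact hPl1.2.2.1 v hv,
        List.mem_cons_of_mem _ hPl1.2.2.2⟩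
    have h2 := hmaxl _ hP2
    rw [List.length_cons, hlt] at h2
    omega
  have hTail : ∀ (l1 : List V) (b : V), PP G A v₀ (l1 ++ [b]) → (l1 ++ [b]).length = t →
      ∀ u, u ∈ A → G.Adj b u → u ∈ l1 ++ [b] := by
    intro l1 b hPl1 hlt u huA hadj
    by_contra hul
    have hch : ((l1 ++ [b]) ++ [u]).Chain' G.Adj := by
      apply List.IsChain.append hPl1.1 (List.isChain_singleton u)
      intro x hx y hy
      rw [List.getLast?_concat] at hx
      simp at hx hy
      subst hx; subst hy
      exact hadj
    have hnd : ((l1 ++ [b]) ++ [u]).Nodup := by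
      rw [List.nodup_append]
      exact ⟨hPl1.2.1, List.nodup_singleton u, by
        intro a ha b hb
        simp at hb
        subst hb
        exact fun h => hul (h ▸ ha)⟩
    have hP2 : PP G A v₀ ((l1 ++ [b]) ++ [u]) :=
      ⟨hch, hnd, by
        intro v hv
        rcases List.mem_append.1 hv with hv | hv
        · exact hPl1.2.2.1 v hv
        · simp at hv; subst hv; exact huA,
        List.mem_append_left _ hPl1.2.2.2⟩
    have h2 := hmaxl _ hP2
    rw [List.length_append, hlt] at h2
    simp at h2
  rcases l with _ | ⟨a, _ | ⟨b, _ | ⟨c, _ | ⟨d, _ | ⟨e, rest⟩⟩⟩⟩⟩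
  · simpa using hPl.2.2.2
  · -- l = [a]
    have hva : v₀ = a := by simpa using hPl.2.2.2
    obtain ⟨u, huA, hu0, hus⟩ := hfind {a} (by simp)
    have h3 := hHead a [] hPl hlen u huA (by rw [← hva]; exact hu0)
    simp at h3 hus
    exact hus h3
  · -- l = [a,b]
    have hab : G.Adj a b := (List.isChain_cons_cons.1 hPl.1).1
    have haA : a ∈ A := hPl.2.2.1 a (by simp)
    have hbA : b ∈ A := hPl.2.2.1 b (by simp)
    have hFa : A.filter (G.Adj a) ⊆ {b} := by
      intro u hu
      rcases Finset.mem_filter.1 hu with ⟨h1, h2⟩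
      have h3 := hHead a [b] hPl hlen u h1 h2
      have h4 : u ≠ a := (G.ne_of_adj h2).symm
      simp at h3 ⊢
      tauto
    have hca : 3 ≤ (A.filter (G.Adj a)).card := by
      rcases hmin a haA with h | h
      · exfalso
        have hb' : b ∈ A.filter (G.Adj a) := Finset.mem_filter.2 ⟨hbA, hab⟩
        rw [Finset.card_eq_zero] at h
        simp [h] at hb'
      · exact h
    have := Finset.card_le_card hFa
    simp at this
    omega
  · -- l = [a,b,c]
    have hch := hPl.1
    rw [List.Chain', List.isChain_cons_cons, List.isChain_cons_cons] at hch
    obtain ⟨hab, hbc, -⟩ := hch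
    have haA : a ∈ A := hPl.2.2.1 a (by simp)
    have hbA : b ∈ A := hPl.2.2.1 b (by simp)
    have hFa : A.filter (G.Adj a) ⊆ {b, c} := by
      intro u hu
      rcases Finset.mem_filter.1 hu with ⟨h1, h2⟩
      have h3 := hHead a [b,c] hPl hlen u h1 h2
      have h4 : u ≠ a := (G.ne_of_adj h2).symm
      simp at h3 ⊢
      tauto
    have hca : 3 ≤ (A.filter (G.Adj a)).card := by
      rcases hmin a haA with h | h
      · exfalso
        have hb' : b ∈ A.filter (G.Adj a) := Finset.mem_filter.2 ⟨hbA, hab⟩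
        rw [Finset.card_eq_zero] at h
        simp [h] at hb'
      · exact h
    have h1 := Finset.card_le_card hFa
    have h2 := Finset.card_insert_le b ({c} : Finset V)
    have h3 : ({c} : Finset V).card = 1 := Finset.card_singleton c
    omega
  · -- l = [a,b,c,d]
    have hch := hPl.1
    rw [List.Chain', List.isChain_cons_cons, List.isChain_cons_cons, List.isChain_cons_cons] at hch
    obtain ⟨hab, hbc, hcd, -⟩ := hch
    have haA : a ∈ A := hPl.2.2.1 a (by simp)
    have hbA : b ∈ A := hPl.2.2.1 b (by simp)
    have hcA : c ∈ A := hPl.2.2.1 c (by simp)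
    have hdA : d ∈ A := hPl.2.2.1 d (by simp)
    have nab : a ≠ b := by have h := hPl.2.1; simp at h; tauto
    have nac : a ≠ c := by have h := hPl.2.1; simp at h; tauto
    have nad : a ≠ d := by have h := hPl.2.1; simp at h; tauto
    have nbc : b ≠ c := by have h := hPl.2.1; simp at h; tauto
    have nbd : b ≠ d := by have h := hPl.2.1; simp at h; tauto
    have ncd : c ≠ d := by have h := hPl.2.1; simp at h; tauto
    have hFa : A.filter (G.Adj a) ⊆ {b, c, d} := by
      intro u hu
      rcases Finset.mem_filter.1 hu with ⟨h1, h2⟩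
      have h3 := hHead a [b,c,d] hPl hlen u h1 h2
      have h4 : u ≠ a := (G.ne_of_adj h2).symm
      simp at h3 ⊢
      tauto
    have hFd : A.filter (G.Adj d) ⊆ {a, b, c} := by
      intro u hu
      rcases Finset.mem_filter.1 hu with ⟨h1, h2⟩
      have h3 := hTail [a,b,c] d hPl hlen u h1 h2
      have h4 : u ≠ d := (G.ne_of_adj h2).symm
      simp at h3 ⊢
      tauto
    have hca : 3 ≤ (A.filter (G.Adj a)).card := by
      rcases hmin a haA with h | h
      · exfalso
        have hb' : b ∈ A.filter (G.Adj a) := Finset.mem_filter.2 ⟨hbA, hab⟩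
        rw [Finset.card_eq_zero] at h
        simp [h] at hb'
      · exact h
    have hcdd : 3 ≤ (A.filter (G.Adj d)).card := by
      rcases hmin d hdA with h | h
      · exfalso
        have hc' : c ∈ A.filter (G.Adj d) := Finset.mem_filter.2 ⟨hcA, hcd.symm⟩
        rw [Finset.card_eq_zero] at h
        simp [h] at hc'
      · exact h
    have hc3 : ({b,c,d} : Finset V).card ≤ 3 := by
      have h1 := Finset.card_insert_le b ({c,d} : Finset V)
      have h2 := Finset.card_insert_le c ({d} : Finset V)
      have h3 : ({d} : Finset V).card = 1 := Finset.card_singleton d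
      omega
    have hc3' : ({a,b,c} : Finset V).card ≤ 3 := by
      have h1 := Finset.card_insert_le a ({b,c} : Finset V)
      have h2 := Finset.card_insert_le b ({c} : Finset V)
      have h3 : ({c} : Finset V).card = 1 := Finset.card_singleton c
      omega
    have heqa : A.filter (G.Adj a) = {b,c,d} :=
      Finset.eq_of_subset_of_card_le hFa (by omega)
    have heqd : A.filter (G.Adj d) = {a,b,c} :=
      Finset.eq_of_subset_of_card_le hFd (by omega)
    have hac : G.Adj a c := by
      have h : c ∈ A.filter (G.Adj a) := by rw [heqa]; simp
      exact (Finset.mem_filter.1 h).2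
    have had : G.Adj a d := by
      have h : d ∈ A.filter (G.Adj a) := by rw [heqa]; simp
      exact (Finset.mem_filter.1 h).2
    have hdb : G.Adj d b := by
      have h : b ∈ A.filter (G.Adj d) := by rw [heqd]; simp
      exact (Finset.mem_filter.1 h).2
    have hcard4 : ({a,b,c,d} : Finset V).card ≤ 4 := by
      have h1 := Finset.card_insert_le a ({b,c,d} : Finset V)
      omega
    obtain ⟨u, huA, hu0, hus⟩ := hfind {a,b,c,d} hcard4
    simp only [Finset.mem_insert, Finset.mem_singleton] at hus
    push_neg at hus
    obtain ⟨nua, nub, nuc, nud⟩ := hus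
    have hv0 := hPl.2.2.2
    simp at hv0
    have hfin : ∀ L : List V, PP G A v₀ L → L.length = 5 → False := by
      intro L hPL hL5
      have h2 := hmaxl _ hPL
      rw [hL5] at h2
      have h3 : t = 4 := by simpa using hlen.symm
      omega
    rcases hv0 with h | h | h | h
    · rw [h] at hu0
      exact hfin [b,c,d,a,u]
        ⟨chain5 hbc hcd had.symm hu0,
         nodup5 nbc nbd nab.symm nub.symm ncd nac.symm nuc.symm nad.symm nud.symm nua.symm,
         mem5 hbA hcA hdA haA huA, by rw [h]; simp⟩ rfl
    · rw [h] at hu0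
      exact hfin [a,c,d,b,u]
        ⟨chain5 hac hcd hdb hu0,
         nodup5 nac nad nab nua.symm ncd nbc.symm nuc.symm nbd.symm nud.symm nub.symm,
         mem5 haA hcA hdA hbA huA, by rw [h]; simp⟩ rfl
    · rw [h] at hu0
      exact hfin [a,b,d,c,u]
        ⟨chain5 hab hdb.symm hcd.symm hu0,
         nodup5 nab nad nac nua.symm nbd nbc nub.symm ncd.symm nud.symm nuc.symm,
         mem5 haA hbA hdA hcA huA, by rw [h]; simp⟩ rfl
    · rw [h] at hu0
      exact hfin [a,b,c,d,u]
        ⟨chain5 hab hbc hcd hu0,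
         nodup5 nab nac nad nua.symm nbc nbd nub.symm ncd nuc.symm nud.symm,
         mem5 haA hbA hcA hdA huA, by rw [h]; simp⟩ rfl
  · -- l = a :: b :: c :: d :: e :: rest
    rcases rest with _ | ⟨f, r⟩
    case cons => have := hbound _ hPl; simp at this; omega
    -- l = [a,b,c,d,e]
    have hch := hPl.1
    rw [List.Chain', List.isChain_cons_cons, List.isChain_cons_cons, List.isChain_cons_cons, List.isChain_cons_cons] at hch
    obtain ⟨hab, hbc, hcd, hde, -⟩ := hch
    have haA : a ∈ A := hPl.2.2.1 a (by simp)
    have hbA : b ∈ A := hPl.2.2.1 b (by simp)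
    have hcA : c ∈ A := hPl.2.2.1 c (by simp)
    have hdA : d ∈ A := hPl.2.2.1 d (by simp)
    have heA : e ∈ A := hPl.2.2.1 e (by simp)
    have nab : a ≠ b := by have h := hPl.2.1; simp at h; tauto
    have nac : a ≠ c := by have h := hPl.2.1; simp at h; tauto
    have nad : a ≠ d := by have h := hPl.2.1; simp at h; tauto
    have nae : a ≠ e := by have h := hPl.2.1; simp at h; tauto
    have nbc : b ≠ c := by have h := hPl.2.1; simp at h; tauto
    have nbd : b ≠ d := by have h := hPl.2.1; simp at h; tauto
    have nbe : b ≠ e := by have h := hPl.2.1; simp at h; tauto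
    have ncd : c ≠ d := by have h := hPl.2.1; simp at h; tauto
    have nce : c ≠ e := by have h := hPl.2.1; simp at h; tauto
    have nde : d ≠ e := by have h := hPl.2.1; simp at h; tauto
    have hv0 := hPl.2.2.2
    simp at hv0
    have hv0' : v₀ ∈ ({a,b,c,d,e} : Finset V) := by simp; tauto
    have hcard4 : (({a,b,c,d,e} : Finset V).erase v₀).card ≤ 4 := by
      rw [Finset.card_erase_of_mem hv0']
      have h1 := Finset.card_insert_le a ({b,c,d,e} : Finset V)
      have h2 := Finset.card_insert_le b ({c,d,e} : Finset V)
      have h3 := Finset.card_insert_le c ({d,e} : Finset V)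
      have h4 := Finset.card_insert_le d ({e} : Finset V)
      have h5 : ({e} : Finset V).card = 1 := Finset.card_singleton e
      omega
    obtain ⟨u, huA, hu0, hus⟩ := hfind _ hcard4
    have huset : u ∉ ({a,b,c,d,e} : Finset V) := by
      intro hmem
      exact hus (Finset.mem_erase.2 ⟨(G.ne_of_adj hu0).symm, hmem⟩)
    simp only [Finset.mem_insert, Finset.mem_singleton] at huset
    push_neg at huset
    obtain ⟨nua, nub, nuc, nud, nue⟩ := huset
    have hfin : ∀ L : List V, L.Chain' G.Adj → L.Nodup → (∀ v ∈ L, v ∈ A) →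
        L.length = 6 → False := by
      intro L h1 h2 h3 h6
      have := hno L h1 h2 h3
      omega
    by_cases hae : G.Adj a e
    · rcases hv0 with h | h | h | h | h <;> rw [h] at hu0
      · exact hfin [b,c,d,e,a,u] (chain6 hbc hcd hde hae.symm hu0)
          (nodup6 nbc nbd nbe nab.symm nub.symm ncd nce nac.symm nuc.symm nde
            nad.symm nud.symm nae.symm nue.symm nua.symm)
          (mem6 hbA hcA hdA heA haA huA) rfl
      · exact hfin [c,d,e,a,b,u] (chain6 hcd hde hae.symm hab hu0)
          (nodup6 ncd nce nac.symm nbc.symm nuc.symm nde nad.symm nbd.symm nud.symm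
            nae.symm nbe.symm nue.symm nab nua.symm nub.symm)
          (mem6 hcA hdA heA haA hbA huA) rfl
      · exact hfin [d,e,a,b,c,u] (chain6 hde hae.symm hab hbc hu0)
          (nodup6 nde nad.symm nbd.symm ncd.symm nud.symm nae.symm nbe.symm nce.symm
            nue.symm nab nac nua.symm nbc nub.symm nuc.symm)
          (mem6 hdA heA haA hbA hcA huA) rfl
      · exact hfin [e,a,b,c,d,u] (chain6 hae.symm hab hbc hcd hu0)
          (nodup6 nae.symm nbe.symm nce.symm nde.symm nue.symm nab nac nad nua.symm
            nbc nbd nub.symm ncd nuc.symm nud.symm)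
          (mem6 heA haA hbA hcA hdA huA) rfl
      · exact hfin [a,b,c,d,e,u] (chain6 hab hbc hcd hde hu0)
          (nodup6 nab nac nad nae nua.symm nbc nbd nbe nub.symm ncd nce nuc.symm
            nde nud.symm nue.symm)
          (mem6 haA hbA hcA hdA heA huA) rfl
    · -- ¬ G.Adj a e : get extra chords
      have hFa : A.filter (G.Adj a) ⊆ {b, c, d} := by
        intro w hw
        rcases Finset.mem_filter.1 hw with ⟨h1, h2⟩
        have h3 := hHead a [b,c,d,e] hPl hlen w h1 h2
        have h4 : w ≠ a := (G.ne_of_adj h2).symm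
        have h5 : w ≠ e := fun hh => hae (hh ▸ h2)
        simp at h3 ⊢
        tauto
      have hFe : A.filter (G.Adj e) ⊆ {b, c, d} := by
        intro w hw
        rcases Finset.mem_filter.1 hw with ⟨h1, h2⟩
        have h3 := hTail [a,b,c,d] e hPl hlen w h1 h2
        have h4 : w ≠ e := (G.ne_of_adj h2).symm
        have h5 : w ≠ a := fun hh => hae (G.adj_symm (hh ▸ h2))
        simp at h3 ⊢
        tauto
      have hca : 3 ≤ (A.filter (G.Adj a)).card := by
        rcases hmin a haA with h | h
        · exfalso
          have hb' : b ∈ A.filter (G.Adj a) := Finset.mem_filter.2 ⟨hbA, hab⟩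
          rw [Finset.card_eq_zero] at h
          simp [h] at hb'
        · exact h
      have hce : 3 ≤ (A.filter (G.Adj e)).card := by
        rcases hmin e heA with h | h
        · exfalso
          have hd' : d ∈ A.filter (G.Adj e) := Finset.mem_filter.2 ⟨hdA, hde.symm⟩
          rw [Finset.card_eq_zero] at h
          simp [h] at hd'
        · exact h
      have hc3 : ({b,c,d} : Finset V).card ≤ 3 := by
        have h1 := Finset.card_insert_le b ({c,d} : Finset V)
        have h2 := Finset.card_insert_le c ({d} : Finset V)
        have h3 : ({d} : Finset V).card = 1 := Finset.card_singleton d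
        omega
      have heqa : A.filter (G.Adj a) = {b,c,d} :=
        Finset.eq_of_subset_of_card_le hFa (by omega)
      have heqe : A.filter (G.Adj e) = {b,c,d} :=
        Finset.eq_of_subset_of_card_le hFe (by omega)
      have hac : G.Adj a c := by
        have h : c ∈ A.filter (G.Adj a) := by rw [heqa]; simp
        exact (Finset.mem_filter.1 h).2
      have heb : G.Adj e b := by
        have h : b ∈ A.filter (G.Adj e) := by rw [heqe]; simp
        exact (Finset.mem_filter.1 h).2
      -- 5-cycle a - b - e - d - c - a
      rcases hv0 with h | h | h | h | h <;> rw [h] at hu0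
      · exact hfin [b,e,d,c,a,u] (chain6 heb.symm hde.symm hcd.symm hac.symm hu0)
          (nodup6 nbe nbd nbc nab.symm nub.symm nde.symm nce.symm nae.symm nue.symm
            ncd.symm nad.symm nud.symm nac.symm nuc.symm nua.symm)
          (mem6 hbA heA hdA hcA haA huA) rfl
      · exact hfin [e,d,c,a,b,u] (chain6 hde.symm hcd.symm hac.symm hab hu0)
          (nodup6 nde.symm nce.symm nae.symm nbe.symm nue.symm ncd.symm nad.symm
            nbd.symm nud.symm nac.symm nbc.symm nuc.symm nab nua.symm nub.symm)
          (mem6 heA hdA hcA haA hbA huA) rfl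
      · exact hfin [a,b,e,d,c,u] (chain6 hab heb.symm hde.symm hcd.symm hu0)
          (nodup6 nab nae nad nac nua.symm nbe nbd nbc nub.symm nde.symm nce.symm
            nue.symm ncd.symm nud.symm nuc.symm)
          (mem6 haA hbA heA hdA hcA huA) rfl
      · exact hfin [c,a,b,e,d,u] (chain6 hac.symm hab heb.symm hde.symm hu0)
          (nodup6 nac.symm nbc.symm nce ncd nuc.symm nab nae nad nua.symm nbe nbd
            nub.symm nde.symm nue.symm nud.symm)
          (mem6 hcA haA hbA heA hdA huA) rfl
      · exact hfin [d,c,a,b,e,u] (chain6 hcd.symm hac.symm hab heb.symm hu0)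
          (nodup6 ncd.symm nad.symm nbd.symm nde nud.symm nac.symm nbc.symm nce
            nuc.symm nab nae nua.symm nbe nub.symm nue.symm)
          (mem6 hdA hcA haA hbA heA huA) rfl

lemma combBound {G : SimpleGraph V} [DecidableRel G.Adj] (A : Finset V)
    (hno : ∀ l : List V, l.Chain' G.Adj → l.Nodup → (∀ v ∈ l, v ∈ A) → l.length ≤ 5) :
    ∑ v ∈ A, (A.filter (G.Adj v)).card ≤ 2 * ∑ v ∈ A, min (A.filter (G.Adj v)).card 2 := by
  classical
  induction A using Finset.strongInduction with
  | _ A ih =>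
    by_cases hex : ∃ v ∈ A, (A.filter (G.Adj v)).card ≤ 2
    · obtain ⟨v, hv, hd⟩ := hex
      set A' := A.erase v with hA'
      have hssub : A' ⊂ A := Finset.erase_ssubset hv
      have hno' : ∀ l : List V, l.Chain' G.Adj → l.Nodup → (∀ w ∈ l, w ∈ A') → l.length ≤ 5 :=
        fun l h1 h2 h3 => hno l h1 h2 (fun w hw => Finset.mem_of_mem_erase (h3 w hw))
      have IH := ih A' hssub hno'
      have hvA' : v ∉ A' := Finset.notMem_erase v A
      have hAv : A = insert v A' := (Finset.insert_erase hv).symm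
      -- degree relations
      have hdd : ∀ w, (A.filter (G.Adj w)).card
          = (A'.filter (G.Adj w)).card + (if G.Adj w v then 1 else 0) := by
        intro w
        rw [hAv, Finset.filter_insert]
        split
        · rw [Finset.card_insert_of_notMem (fun hc => hvA' (Finset.mem_of_mem_filter v hc))]
        · simp
      have hvv : (A.filter (G.Adj v)).card = (A'.filter (G.Adj v)).card := by
        rw [hdd v]
        simp
      -- sum over A
      have e1 : ∑ w ∈ A, (A.filter (G.Adj w)).card
          = (A.filter (G.Adj v)).card + ∑ w ∈ A', (A.filter (G.Adj w)).card := by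
        rw [hAv, Finset.sum_insert hvA']
      have e2 : ∑ w ∈ A', (A.filter (G.Adj w)).card
          = (∑ w ∈ A', (A'.filter (G.Adj w)).card) + (A'.filter (G.Adj v)).card := by
        have : ∀ w ∈ A', (A.filter (G.Adj w)).card
            = (A'.filter (G.Adj w)).card + (if G.Adj w v then 1 else 0) := fun w _ => hdd w
        rw [Finset.sum_congr rfl this, Finset.sum_add_distrib]
        congr 1
        rw [Finset.card_filter]
        apply Finset.sum_congr rfl
        intro w _
        exact if_congr (G.adj_comm w v) rfl rfl
      have e4 : ∑ w ∈ A, min (A.filter (G.Adj w)).card 2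
          = min (A.filter (G.Adj v)).card 2 + ∑ w ∈ A', min (A.filter (G.Adj w)).card 2 := by
        rw [hAv, Finset.sum_insert hvA']
      have e5 : ∑ w ∈ A', min (A'.filter (G.Adj w)).card 2
          ≤ ∑ w ∈ A', min (A.filter (G.Adj w)).card 2 := by
        apply Finset.sum_le_sum
        intro w _
        have := hdd w
        omega
      have e6 : min (A.filter (G.Adj v)).card 2 = (A.filter (G.Adj v)).card := by omega
      omega
    · push_neg at hex
      have hmin : ∀ v ∈ A, (A.filter (G.Adj v)).card = 0 ∨ 3 ≤ (A.filter (G.Adj v)).card := by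
        intro v hv
        have := hex v hv
        omega
      have h4 : ∀ v ∈ A, (A.filter (G.Adj v)).card ≤ 4 := by
        intro v hv
        by_contra h
        exact auxNoBig A hno hmin v hv (by omega)
      rw [Finset.mul_sum]
      apply Finset.sum_le_sum
      intro w hw
      have h1 := hmin w hw
      have h2 := h4 w hw
      omega

lemma nodup7 {a b c d e f g : V} (h1 : a ≠ b) (h2 : a ≠ c) (h3 : a ≠ d) (h4 : a ≠ e)
    (h5 : a ≠ f) (h6 : a ≠ g) (h7 : b ≠ c) (h8 : b ≠ d) (h9 : b ≠ e) (h10 : b ≠ f)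
    (h11 : b ≠ g) (h12 : c ≠ d) (h13 : c ≠ e) (h14 : c ≠ f) (h15 : c ≠ g)
    (h16 : d ≠ e) (h17 : d ≠ f) (h18 : d ≠ g) (h19 : e ≠ f) (h20 : e ≠ g)
    (h21 : f ≠ g) : ([a,b,c,d,e,f,g] : List V).Nodup := by
  simp [h1,h2,h3,h4,h5,h6,h7,h8,h9,h10,h11,h12,h13,h14,h15,h16,h17,h18,h19,h20,h21]

lemma H7path {G : SimpleGraph V} [DecidableRel G.Adj] (hfree : H7Free G) (u : V)
    (l : List V) (hc : l.Chain' G.Adj) (hn : l.Nodup) (hm : ∀ v ∈ l, G.Adj u v) :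
    l.length ≤ 5 := by
  by_contra hlen
  push_neg at hlen
  rcases l with _|⟨w0,_|⟨w1,_|⟨w2,_|⟨w3,_|⟨w4,_|⟨w5,rest⟩⟩⟩⟩⟩⟩ <;> simp at hlen
  rw [List.Chain', List.isChain_cons_cons, List.isChain_cons_cons, List.isChain_cons_cons, List.isChain_cons_cons,
    List.isChain_cons_cons] at hc
  obtain ⟨h01, h12, h23, h34, h45, -⟩ := hc
  have hu0 : G.Adj u w0 := hm w0 (by simp)
  have hu1 : G.Adj u w1 := hm w1 (by simp)
  have hu2 : G.Adj u w2 := hm w2 (by simp)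
  have hu3 : G.Adj u w3 := hm w3 (by simp)
  have hu4 : G.Adj u w4 := hm w4 (by simp)
  have hu5 : G.Adj u w5 := hm w5 (by simp)
  have n01 : w0 ≠ w1 := by have h := hn; simp at h; tauto
  have n02 : w0 ≠ w2 := by have h := hn; simp at h; tauto
  have n03 : w0 ≠ w3 := by have h := hn; simp at h; tauto
  have n04 : w0 ≠ w4 := by have h := hn; simp at h; tauto
  have n05 : w0 ≠ w5 := by have h := hn; simp at h; tauto
  have n12 : w1 ≠ w2 := by have h := hn; simp at h; tauto
  have n13 : w1 ≠ w3 := by have h := hn; simp at h; tauto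
  have n14 : w1 ≠ w4 := by have h := hn; simp at h; tauto
  have n15 : w1 ≠ w5 := by have h := hn; simp at h; tauto
  have n23 : w2 ≠ w3 := by have h := hn; simp at h; tauto
  have n24 : w2 ≠ w4 := by have h := hn; simp at h; tauto
  have n25 : w2 ≠ w5 := by have h := hn; simp at h; tauto
  have n34 : w3 ≠ w4 := by have h := hn; simp at h; tauto
  have n35 : w3 ≠ w5 := by have h := hn; simp at h; tauto
  have n45 : w4 ≠ w5 := by have h := hn; simp at h; tauto
  have hl7 : ([w0,w1,w2,w3,w4,w5,u] : List V).Nodup :=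
    nodup7 n01 n02 n03 n04 n05 (G.ne_of_adj hu0).symm n12 n13 n14 n15
      (G.ne_of_adj hu1).symm n23 n24 n25 (G.ne_of_adj hu2).symm n34 n35
      (G.ne_of_adj hu3).symm n45 (G.ne_of_adj hu4).symm (G.ne_of_adj hu5).symm
  apply hfree
  refine ⟨([w0,w1,w2,w3,w4,w5,u] : List V).get, List.nodup_iff_injective_get.mp hl7, ?_⟩
  intro a b hab
  fin_cases a <;> fin_cases b <;>
    (try simp [fanH7, SimpleGraph.fromRel_adj] at hab) <;>
    first
      | exact h01 | exact h01.symm | exact h12 | exact h12.symm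
      | exact h23 | exact h23.symm | exact h34 | exact h34.symm
      | exact h45 | exact h45.symm
      | exact hu0 | exact hu0.symm | exact hu1 | exact hu1.symm
      | exact hu2 | exact hu2.symm | exact hu3 | exact hu3.symm
      | exact hu4 | exact hu4.symm | exact hu5 | exact hu5.symm
      | exact absurd hab (by decide)

def indG (G : SimpleGraph V) (B : Finset V) : SimpleGraph V where
  Adj a b := G.Adj a b ∧ a ∈ B ∧ b ∈ B
  symm := by
    constructor
    intro a b h
    exact ⟨h.1.symm, h.2.2, h.2.1⟩
  loopless := ⟨fun a h => G.loopless.irrefl a h.1⟩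

instance (G : SimpleGraph V) [DecidableRel G.Adj] (B : Finset V) :
    DecidableRel (indG G B).Adj :=
  fun a b => inferInstanceAs (Decidable (G.Adj a b ∧ a ∈ B ∧ b ∈ B))

lemma edgesIn_eq [Fintype V] (G : SimpleGraph V) [DecidableRel G.Adj] (B : Finset V) :
    2 * edgesIn G (B : Set V) = ∑ v ∈ B, (B.filter (G.Adj v)).card := by
  classical
  have hset : {e ∈ G.edgeSet | ∀ v ∈ e, v ∈ (B : Set V)} = (indG G B).edgeSet := by
    ext e
    induction e using Sym2.ind with
    | _ a b =>
      simp only [Set.mem_setOf_eq, SimpleGraph.mem_edgeSet, indG]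
      constructor
      · rintro ⟨h1, h2⟩
        exact ⟨h1, h2 a (Sym2.mem_mk_left a b), h2 b (Sym2.mem_mk_right a b)⟩
      · rintro ⟨h1, h2, h3⟩
        refine ⟨h1, fun v hv => ?_⟩
        rcases Sym2.mem_iff.1 hv with rfl | rfl
        · exact h2
        · exact h3
  have h1 : edgesIn G (B : Set V) = (indG G B).edgeFinset.card := by
    rw [edgesIn, hset, ← SimpleGraph.coe_edgeFinset, Set.ncard_coe_finset]
  rw [h1, ← SimpleGraph.sum_degrees_eq_twice_card_edges]
  rw [← Finset.sum_sdiff (Finset.subset_univ B)]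
  have hz : ∀ v ∈ Finset.univ \ B, (indG G B).degree v = 0 := by
    intro v hv
    simp only [Finset.mem_sdiff] at hv
    rw [SimpleGraph.degree]
    rw [Finset.card_eq_zero, SimpleGraph.neighborFinset_eq_filter, Finset.filter_eq_empty_iff]
    intro w _
    exact fun hadj => hv.2 hadj.2.1
  rw [Finset.sum_eq_zero hz, zero_add]
  apply Finset.sum_congr rfl
  intro v hv
  rw [SimpleGraph.degree, SimpleGraph.neighborFinset_eq_filter]
  congr 1
  ext w
  rw [Finset.mem_filter, Finset.mem_filter]
  simp only [Finset.mem_filter, Finset.mem_univ, true_and, indG]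
  constructor
  · rintro ⟨h1, -, h3⟩
    exact ⟨h3, h1⟩
  · rintro ⟨h1, h2⟩
    exact ⟨h2, hv, h1⟩


end AuxStatement11

/-- For a connected `H₇`-free graph `G` with `m` edges, a Perron vector `x`
maximized at `u*`, `A = N(u*)` and `B = V ∖ (A ∪ {u*})`: if `ρ² − 2ρ ≥ m − 3`,
then `e(B) ≤ 3`. -/
theorem edges_B_le_three (m : ℕ) {V : Type} [Fintype V] [DecidableEq V]
    (G : SimpleGraph V) [DecidableRel G.Adj] (hconn : G.Connected)
    (hsize : G.edgeFinset.card = m) (hfree : H7Free G)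
    (x : V → ℝ) (hpos : ∀ v, 0 < x v) (heig : G.adjMatrix ℝ *ᵥ x = specRad G • x)
    (ustar : V) (hmax : ∀ v, x v ≤ x ustar)
    (B : Finset V)
    (hB : B = Finset.univ \ insert ustar (G.neighborFinset ustar))
    (hrho : (specRad G) ^ 2 - 2 * specRad G ≥ (m : ℝ) - 3) :
    edgesIn G (B : Set V) ≤ 3 := by
  classical
  set ρ := specRad G with hρ
  set A := G.neighborFinset ustar with hA
  have hUA : ustar ∉ A := by
    rw [hA]
    simp
  have hsplit : ∀ (M : Type) [AddCommMonoid M] (f : V → M),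
      ∑ w, f w = f ustar + ∑ w ∈ A, f w + ∑ w ∈ B, f w := by
    intro M _ f
    have h1 : ∑ w ∈ Finset.univ \ insert ustar A, f w + ∑ w ∈ insert ustar A, f w
        = ∑ w, f w := Finset.sum_sdiff (Finset.subset_univ _)
    rw [hB, ← h1, Finset.sum_insert hUA]
    abel
  have hdeg : ∀ v : V, ∑ w ∈ G.neighborFinset v, x w = ρ * x v := by
    intro v
    have h := congrFun heig v
    rw [SimpleGraph.adjMatrix_mulVec_apply] at h
    simpa using h
  have hnbr : ∀ v : V, ∑ w ∈ G.neighborFinset v, x w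
      = ∑ w, (if G.Adj v w then x w else 0) := by
    intro v
    rw [SimpleGraph.neighborFinset_eq_filter, Finset.sum_filter]
  have hcnt : ∀ (S : Finset V) (w : V), ∑ v ∈ S, (if G.Adj v w then x w else 0)
      = ((S.filter (G.Adj w)).card : ℝ) * x w := by
    intro S w
    rw [Finset.card_filter]
    push_cast
    rw [Finset.sum_mul]
    apply Finset.sum_congr rfl
    intro v _
    by_cases h : G.Adj v w
    · have h' : G.Adj w v := h.symm
      simp [h, h']
    · have h' : ¬ G.Adj w v := fun hh => h hh.symm
      simp [h, h']
  have hAadj : ∀ v ∈ A, G.Adj v ustar := by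
    intro v hv
    rw [hA, SimpleGraph.mem_neighborFinset] at hv
    exact hv.symm
  have E0 : ρ * x ustar = ∑ v ∈ A, x v := (hdeg ustar).symm
  have hAA : ∑ v ∈ A, ∑ w ∈ A, (if G.Adj v w then x w else 0)
      = ∑ w ∈ A, ((A.filter (G.Adj w)).card : ℝ) * x w := by
    rw [Finset.sum_comm]
    exact Finset.sum_congr rfl fun w _ => hcnt A w
  have hAB : ∑ v ∈ A, ∑ w ∈ B, (if G.Adj v w then x w else 0)
      = ∑ w ∈ B, ((A.filter (G.Adj w)).card : ℝ) * x w := by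
    rw [Finset.sum_comm]
    exact Finset.sum_congr rfl fun w _ => hcnt A w
  have E1 : ρ * (ρ * x ustar) = (A.card : ℝ) * x ustar
      + ∑ w ∈ A, ((A.filter (G.Adj w)).card : ℝ) * x w
      + ∑ w ∈ B, ((A.filter (G.Adj w)).card : ℝ) * x w := by
    rw [E0, Finset.mul_sum]
    calc ∑ v ∈ A, ρ * x v
        = ∑ v ∈ A, ∑ w, (if G.Adj v w then x w else 0) := by
          refine Finset.sum_congr rfl fun v _ => ?_
          rw [← hnbr, hdeg]
      _ = ∑ v ∈ A, ((if G.Adj v ustar then x ustar else 0)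
            + ∑ w ∈ A, (if G.Adj v w then x w else 0)
            + ∑ w ∈ B, (if G.Adj v w then x w else 0)) := by
          refine Finset.sum_congr rfl fun v _ => ?_
          exact hsplit ℝ _
      _ = (∑ v ∈ A, (if G.Adj v ustar then x ustar else 0))
            + (∑ v ∈ A, ∑ w ∈ A, (if G.Adj v w then x w else 0))
            + ∑ v ∈ A, ∑ w ∈ B, (if G.Adj v w then x w else 0) := by
          rw [Finset.sum_add_distrib, Finset.sum_add_distrib]
      _ = (A.card : ℝ) * x ustar
            + ∑ w ∈ A, ((A.filter (G.Adj w)).card : ℝ) * x w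
            + ∑ w ∈ B, ((A.filter (G.Adj w)).card : ℝ) * x w := by
          rw [hAA, hAB]
          congr 1
          congr 1
          rw [Finset.sum_congr rfl (fun v hv => if_pos (hAadj v hv)), Finset.sum_const,
            nsmul_eq_mul]
  have hXpos := hpos ustar
  have key : ρ^2 - 2*ρ ≤ (A.card : ℝ)
      + ∑ w ∈ A, (((A.filter (G.Adj w)).card : ℝ) - ((min (A.filter (G.Adj w)).card 2 : ℕ) : ℝ))
      + ∑ w ∈ B, ((A.filter (G.Adj w)).card : ℝ) := by
    have expand : (ρ^2 - 2*ρ) * x ustar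
        = (A.card : ℝ) * x ustar
          + (∑ w ∈ A, ((A.filter (G.Adj w)).card : ℝ) * x w - 2 * ∑ v ∈ A, x v)
          + ∑ w ∈ B, ((A.filter (G.Adj w)).card : ℝ) * x w := by
      linear_combination E1 - 2 * E0
    have s1 : ∑ w ∈ A, ((A.filter (G.Adj w)).card : ℝ) * x w - 2 * ∑ v ∈ A, x v
        ≤ (∑ w ∈ A, (((A.filter (G.Adj w)).card : ℝ)
            - ((min (A.filter (G.Adj w)).card 2 : ℕ) : ℝ))) * x ustar := by
      rw [Finset.sum_mul, Finset.mul_sum, ← Finset.sum_sub_distrib]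
      apply Finset.sum_le_sum
      intro w _
      set n := (A.filter (G.Adj w)).card with hn
      rcases le_or_gt n 2 with h | h
      · have hmn : min n 2 = n := min_eq_left h
        rw [hmn]
        have h1 : (n:ℝ) - 2 ≤ 0 := by
          have : (n:ℝ) ≤ 2 := by exact_mod_cast h
          linarith
        have h2 := hpos w
        nlinarith
      · have hmn : min n 2 = 2 := min_eq_right (by omega)
        rw [hmn]
        have h1 : (0:ℝ) ≤ (n:ℝ) - 2 := by
          have : (2:ℝ) ≤ (n:ℝ) := by exact_mod_cast h.le
          linarith
        have h2 := mul_le_mul_of_nonneg_left (hmax w) h1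
        push_cast
        nlinarith
    have s2 : ∑ w ∈ B, ((A.filter (G.Adj w)).card : ℝ) * x w
        ≤ (∑ w ∈ B, ((A.filter (G.Adj w)).card : ℝ)) * x ustar := by
      rw [Finset.sum_mul]
      apply Finset.sum_le_sum
      intro w _
      exact mul_le_mul_of_nonneg_left (hmax w) (Nat.cast_nonneg _)
    have hmul : (ρ^2 - 2*ρ) * x ustar
        ≤ ((A.card : ℝ)
          + ∑ w ∈ A, (((A.filter (G.Adj w)).card : ℝ) - ((min (A.filter (G.Adj w)).card 2 : ℕ) : ℝ))
          + ∑ w ∈ B, ((A.filter (G.Adj w)).card : ℝ)) * x ustar := by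
      rw [add_mul, add_mul]
      linarith [expand, s1, s2]
    exact le_of_mul_le_mul_right hmul hXpos
  -- counting identity
  have hdeg2 : ∀ v : V, G.degree v = (if G.Adj v ustar then 1 else 0)
      + (A.filter (G.Adj v)).card + (B.filter (G.Adj v)).card := by
    intro v
    have h0 : G.degree v = ∑ w, if G.Adj v w then 1 else 0 := by
      rw [SimpleGraph.degree, SimpleGraph.neighborFinset_eq_filter]
      exact Finset.card_filter _ _
    rw [h0, hsplit ℕ (fun w => if G.Adj v w then 1 else 0), Finset.card_filter,
      Finset.card_filter]
  have hm2 : 2 * m = ∑ v : V, G.degree v := by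
    rw [SimpleGraph.sum_degrees_eq_twice_card_edges, hsize]
  have hBnadj : ∀ v ∈ B, ¬ G.Adj v ustar := by
    intro v hv hadj
    rw [hB] at hv
    simp only [Finset.mem_sdiff, Finset.mem_insert] at hv
    refine hv.2 (Or.inr ?_)
    rw [hA, SimpleGraph.mem_neighborFinset]
    exact hadj.symm
  have hswap : ∑ v ∈ A, (B.filter (G.Adj v)).card = ∑ w ∈ B, (A.filter (G.Adj w)).card := by
    have e1 : ∑ v ∈ A, (B.filter (G.Adj v)).card
        = ∑ v ∈ A, ∑ w ∈ B, (if G.Adj v w then 1 else 0) :=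
      Finset.sum_congr rfl fun v _ => Finset.card_filter _ _
    have e2 : ∑ w ∈ B, (A.filter (G.Adj w)).card
        = ∑ w ∈ B, ∑ v ∈ A, (if G.Adj v w then 1 else 0) := by
      refine Finset.sum_congr rfl fun w _ => ?_
      rw [Finset.card_filter]
      exact Finset.sum_congr rfl fun v _ => if_congr (G.adj_comm w v) rfl rfl
    rw [e1, e2, Finset.sum_comm]
  have hUAcard : (A.filter (G.Adj ustar)).card = A.card := by
    congr 1
    apply Finset.filter_true_of_mem
    intro v hv
    exact (hAadj v hv).symm
  have hUBcard : (B.filter (G.Adj ustar)).card = 0 := by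
    rw [Finset.card_eq_zero, Finset.filter_eq_empty_iff]
    intro w hw
    exact fun hadj => hBnadj w hw hadj.symm
  have hAit : ∑ v ∈ A, (if G.Adj v ustar then 1 else 0) = A.card := by
    rw [Finset.sum_congr rfl (fun v hv => if_pos (hAadj v hv)), Finset.sum_const,
      smul_eq_mul, mul_one]
  have hBit : ∑ v ∈ B, (if G.Adj v ustar then 1 else 0) = 0 := by
    apply Finset.sum_eq_zero
    intro v hv
    rw [if_neg (hBnadj v hv)]
  have h7 : (if G.Adj ustar ustar then 1 else 0) = 0 := if_neg (G.irrefl)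
  have h3 : ∑ v : V, G.degree v
      = G.degree ustar + ∑ v ∈ A, G.degree v + ∑ v ∈ B, G.degree v :=
    hsplit ℕ (fun v => G.degree v)
  have h4 : G.degree ustar = (if G.Adj ustar ustar then 1 else 0) + A.card
      + (B.filter (G.Adj ustar)).card := by
    rw [hdeg2 ustar, hUAcard]
  have h5 : ∑ v ∈ A, G.degree v
      = A.card + (∑ v ∈ A, (A.filter (G.Adj v)).card) + ∑ v ∈ A, (B.filter (G.Adj v)).card := by
    rw [Finset.sum_congr rfl (fun v _ => hdeg2 v), Finset.sum_add_distrib,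
      Finset.sum_add_distrib, hAit]
  have h6 : ∑ v ∈ B, G.degree v
      = (∑ v ∈ B, (A.filter (G.Adj v)).card) + ∑ v ∈ B, (B.filter (G.Adj v)).card := by
    rw [Finset.sum_congr rfl (fun v _ => hdeg2 v), Finset.sum_add_distrib,
      Finset.sum_add_distrib, hBit]
    omega
  have hcount : 2 * m = 2 * A.card + (∑ w ∈ A, (A.filter (G.Adj w)).card)
      + 2 * (∑ w ∈ B, (A.filter (G.Adj w)).card)
      + (∑ w ∈ B, (B.filter (G.Adj w)).card) := by
    omega
  have hnoA : ∀ l : List V, l.Chain' G.Adj → l.Nodup → (∀ v ∈ l, v ∈ A) → l.length ≤ 5 := by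
    intro l h1 h2 hm3
    refine H7path hfree ustar l h1 h2 fun v hv => ?_
    have := hm3 v hv
    rw [hA, SimpleGraph.mem_neighborFinset] at this
    exact this
  have hcomb := combBound A hnoA
  have hedge := edgesIn_eq G B
  have hsum_cast : ∑ w ∈ A, (((A.filter (G.Adj w)).card : ℝ)
        - ((min (A.filter (G.Adj w)).card 2 : ℕ) : ℝ))
      = ((∑ w ∈ A, (A.filter (G.Adj w)).card : ℕ) : ℝ)
        - ((∑ w ∈ A, min (A.filter (G.Adj w)).card 2 : ℕ) : ℝ) := by
    rw [Finset.sum_sub_distrib]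
    push_cast
    ring
  have hc4 : ∑ w ∈ B, ((A.filter (G.Adj w)).card : ℝ)
      = ((∑ w ∈ B, (A.filter (G.Adj w)).card : ℕ) : ℝ) := (Nat.cast_sum _ _).symm
  rw [hsum_cast, hc4] at key
  have c1 : 2 * (m:ℝ) = 2 * (A.card : ℝ)
      + ((∑ w ∈ A, (A.filter (G.Adj w)).card : ℕ) : ℝ)
      + 2 * ((∑ w ∈ B, (A.filter (G.Adj w)).card : ℕ) : ℝ)
      + ((∑ w ∈ B, (B.filter (G.Adj w)).card : ℕ) : ℝ) := by
    exact_mod_cast hcount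
  have c2 : ((∑ w ∈ A, (A.filter (G.Adj w)).card : ℕ) : ℝ)
      ≤ 2 * ((∑ w ∈ A, min (A.filter (G.Adj w)).card 2 : ℕ) : ℝ) := by
    exact_mod_cast hcomb
  have c5 : ((∑ w ∈ B, (B.filter (G.Adj w)).card : ℕ) : ℝ) ≤ 6 := by
    linarith [hrho, key, c1, c2]
  have c6 : (∑ w ∈ B, (B.filter (G.Adj w)).card : ℕ) ≤ 6 := by exact_mod_cast c5
  omega
end

section
/- Let G be a finite simple graph that is H_7-free. Suppose u*, u_1, u_2, u_3, u_4, u_5 are six distinct vertices such that u* is adjacent to each u_i and {u_1, u_2, u_3, u_4, u_5} is a clique (every pair u_i, u_j with i ≠ j is adjacent). Then every vertex w ∉ {u*, u_1, …, u_5} has at most one neighbor among {u_1, u_2, u_3, u_4, u_5}. -/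
open Matrix Finset

/-- In an `H₇`-free graph, if `u*` is adjacent to each vertex of a
5-clique `{u₁,…,u₅}`, then any vertex outside `{u*,u₁,…,u₅}` has at most one neighbor
in `{u₁,…,u₅}`. -/
theorem h7_free_clique_outside_nbrs {V : Type} [DecidableEq V]
    (G : SimpleGraph V) [DecidableRel G.Adj] (hfree : H7Free G)
    (ustar u1 u2 u3 u4 u5 : V)
    (hdistinct : ({ustar, u1, u2, u3, u4, u5} : Finset V).card = 6)
    (hstar : ∀ u ∈ ({u1, u2, u3, u4, u5} : Finset V), G.Adj ustar u)
    (hclique : ∀ u ∈ ({u1, u2, u3, u4, u5} : Finset V),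
      ∀ v ∈ ({u1, u2, u3, u4, u5} : Finset V), u ≠ v → G.Adj u v)
    (w : V) (hw : w ∉ ({ustar, u1, u2, u3, u4, u5} : Finset V)) :
    (({u1, u2, u3, u4, u5} : Finset V).filter (fun u => G.Adj w u)).card ≤ 1 := by
  classical
  by_contra hcon
  push_neg at hcon
  set S : Finset V := {u1, u2, u3, u4, u5} with hS
  obtain ⟨a, ha, b, hb, hab⟩ := Finset.one_lt_card.mp hcon
  rw [Finset.mem_filter] at ha hb
  obtain ⟨haS, hwa⟩ := ha
  obtain ⟨hbS, hwb⟩ := hb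
  have hc1 := Finset.card_insert_le u1 ({u2, u3, u4, u5} : Finset V)
  have hc2 := Finset.card_insert_le u2 ({u3, u4, u5} : Finset V)
  have hc3 := Finset.card_insert_le u3 ({u4, u5} : Finset V)
  have hc4 := Finset.card_insert_le u4 ({u5} : Finset V)
  have hc5 : ({u5} : Finset V).card = 1 := Finset.card_singleton u5
  have hS5 : S.card ≤ 5 := by
    simp only [hS, Finset.insert_eq] at *
    omega
  have hins : (insert ustar S).card = 6 := hdistinct
  have hstarS : ustar ∉ S := by
    intro hmem
    rw [Finset.insert_eq_self.mpr hmem] at hins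
    omega
  have hScard : S.card = 5 := by
    rw [Finset.card_insert_of_notMem hstarS] at hins
    omega
  have hbmem : b ∈ S.erase a := Finset.mem_erase.mpr ⟨hab.symm, hbS⟩
  set T : Finset V := (S.erase a).erase b with hT
  have hTcard : T.card = 3 := by
    rw [hT, Finset.card_erase_of_mem hbmem, Finset.card_erase_of_mem haS, hScard]
  obtain ⟨c, hc⟩ := Finset.card_pos.mp (by omega : 0 < T.card)
  obtain ⟨d, hd⟩ := Finset.card_pos.mp (by
    rw [Finset.card_erase_of_mem hc]; omega : 0 < (T.erase c).card)
  obtain ⟨e, he⟩ := Finset.card_pos.mp (by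
    rw [Finset.card_erase_of_mem hd, Finset.card_erase_of_mem hc]; omega :
      0 < ((T.erase c).erase d).card)
  rw [Finset.mem_erase] at hd
  rw [Finset.mem_erase, Finset.mem_erase] at he
  obtain ⟨hed, hec, heT⟩ := he
  obtain ⟨hdc, hdT⟩ := hd
  rw [hT, Finset.mem_erase, Finset.mem_erase] at hc hdT heT
  obtain ⟨hcb, hca, hcS⟩ := hc
  obtain ⟨hdb, hda, hdS⟩ := hdT
  obtain ⟨heb, hea, heS⟩ := heT
  have hwu : w ≠ ustar ∧ w ∉ S := by
    constructor
    · intro hweq; exact hw (by rw [hweq]; exact Finset.mem_insert_self _ _)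
    · intro hmem; exact hw (Finset.mem_insert_of_mem hmem)
  obtain ⟨hwus, hwS⟩ := hwu
  have hwa' : w ≠ a := fun h => hwS (h ▸ haS)
  have hwb' : w ≠ b := fun h => hwS (h ▸ hbS)
  have hwc' : w ≠ c := fun h => hwS (h ▸ hcS)
  have hwd' : w ≠ d := fun h => hwS (h ▸ hdS)
  have hwe' : w ≠ e := fun h => hwS (h ▸ heS)
  have hua' : ustar ≠ a := fun h => hstarS (h ▸ haS)
  have hub' : ustar ≠ b := fun h => hstarS (h ▸ hbS)
  have huc' : ustar ≠ c := fun h => hstarS (h ▸ hcS)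
  have hud' : ustar ≠ d := fun h => hstarS (h ▸ hdS)
  have hue' : ustar ≠ e := fun h => hstarS (h ▸ heS)
  -- adjacency facts
  have Abc : G.Adj b c := hclique b hbS c hcS (Ne.symm hcb)
  have Acd : G.Adj c d := hclique c hcS d hdS (Ne.symm hdc)
  have Ade : G.Adj d e := hclique d hdS e heS (Ne.symm hed)
  have Aeu : G.Adj e ustar := (hstar e heS).symm
  have Aaw : G.Adj a w := hwa.symm
  have Aab : G.Adj a b := hclique a haS b hbS hab
  have Aac : G.Adj a c := hclique a haS c hcS (Ne.symm hca)
  have Aad : G.Adj a d := hclique a haS d hdS (Ne.symm hda)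
  have Aae : G.Adj a e := hclique a haS e heS (Ne.symm hea)
  have Aau : G.Adj a ustar := (hstar a haS).symm
  apply hfree
  refine ⟨![w, b, c, d, e, ustar, a], ?_, ?_⟩
  · intro i j hij
    fin_cases i <;> fin_cases j <;>
      first
        | rfl
        | exact absurd hij hwb' | exact absurd hij hwb'.symm
        | exact absurd hij hwc' | exact absurd hij hwc'.symm
        | exact absurd hij hwd' | exact absurd hij hwd'.symm
        | exact absurd hij hwe' | exact absurd hij hwe'.symm
        | exact absurd hij hwus | exact absurd hij hwus.symm
        | exact absurd hij hwa' | exact absurd hij hwa'.symm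
        | exact absurd hij hcb | exact absurd hij hcb.symm
        | exact absurd hij hdb | exact absurd hij hdb.symm
        | exact absurd hij heb | exact absurd hij heb.symm
        | exact absurd hij hub' | exact absurd hij hub'.symm
        | exact absurd hij hab | exact absurd hij hab.symm
        | exact absurd hij hdc | exact absurd hij hdc.symm
        | exact absurd hij hec | exact absurd hij hec.symm
        | exact absurd hij huc' | exact absurd hij huc'.symm
        | exact absurd hij hca | exact absurd hij hca.symm
        | exact absurd hij hed | exact absurd hij hed.symm
        | exact absurd hij hud' | exact absurd hij hud'.symm
        | exact absurd hij hda | exact absurd hij hda.symm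
        | exact absurd hij hue' | exact absurd hij hue'.symm
        | exact absurd hij hea | exact absurd hij hea.symm
        | exact absurd hij hua' | exact absurd hij hua'.symm
  · intro i j hadj
    fin_cases i <;> fin_cases j <;>
      simp only [fanH7, SimpleGraph.fromRel_adj] at hadj <;>
      first
        | exact absurd hadj (by decide)
        | exact hwb | exact hwb.symm
        | exact Abc | exact Abc.symm
        | exact Acd | exact Acd.symm
        | exact Ade | exact Ade.symm
        | exact Aeu | exact Aeu.symm
        | exact Aaw | exact Aaw.symm
        | exact Aab | exact Aab.symm
        | exact Aac | exact Aac.symm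
        | exact Aad | exact Aad.symm
        | exact Aae | exact Aae.symm
        | exact Aau | exact Aau.symm
end

section
/- Let G be a finite simple graph that is H_7-free. Suppose u*, u_1, u_2, u_3, u_4, u_5 are six distinct vertices such that u* is adjacent to each u_i and the pairs among {u_1, …, u_5} are all adjacent except that u_4 and u_5 are not adjacent (so {u_1,…,u_5} induces K_5 minus the edge u_4u_5). Then every vertex w ∉ {u*, u_1, …, u_5} that is adjacent to at least one of u_1, u_2, u_3 has exactly one neighbor in {u_1, u_2, u_3} and no neighbor in {u_4, u_5}. -/
open Matrix Finset

lemma fan_of {V : Type} (G : SimpleGraph V) (h p0 p1 p2 p3 p4 p5 : V)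
    (a01 : G.Adj p0 p1) (a12 : G.Adj p1 p2) (a23 : G.Adj p2 p3)
    (a34 : G.Adj p3 p4) (a45 : G.Adj p4 p5)
    (b0 : G.Adj h p0) (b1 : G.Adj h p1) (b2 : G.Adj h p2)
    (b3 : G.Adj h p3) (b4 : G.Adj h p4) (b5 : G.Adj h p5)
    (n02 : p0 ≠ p2) (n03 : p0 ≠ p3) (n04 : p0 ≠ p4) (n05 : p0 ≠ p5)
    (n13 : p1 ≠ p3) (n14 : p1 ≠ p4) (n15 : p1 ≠ p5)
    (n24 : p2 ≠ p4) (n25 : p2 ≠ p5) (n35 : p3 ≠ p5) :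
    ContainsSub fanH7 G := by
  have e0 : (![p0,p1,p2,p3,p4,p5,h] : Fin 7 → V) 0 = p0 := rfl
  have e1 : (![p0,p1,p2,p3,p4,p5,h] : Fin 7 → V) 1 = p1 := rfl
  have e2 : (![p0,p1,p2,p3,p4,p5,h] : Fin 7 → V) 2 = p2 := rfl
  have e3 : (![p0,p1,p2,p3,p4,p5,h] : Fin 7 → V) 3 = p3 := rfl
  have e4 : (![p0,p1,p2,p3,p4,p5,h] : Fin 7 → V) 4 = p4 := rfl
  have e5 : (![p0,p1,p2,p3,p4,p5,h] : Fin 7 → V) 5 = p5 := rfl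
  have e6 : (![p0,p1,p2,p3,p4,p5,h] : Fin 7 → V) 6 = h := rfl
  refine ⟨![p0, p1, p2, p3, p4, p5, h], ?_, ?_⟩
  · have n01 := a01.ne; have n12 := a12.ne; have n23 := a23.ne
    have n34 := a34.ne; have n45 := a45.ne
    have m0 := b0.ne; have m1 := b1.ne; have m2 := b2.ne
    have m3 := b3.ne; have m4 := b4.ne; have m5 := b5.ne
    intro a b hab
    fin_cases a <;> fin_cases b <;>
      simp_all [e0, e1, e2, e3, e4, e5, e6]
  · intro a b hab
    rw [fanH7, SimpleGraph.fromRel_adj] at hab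
    have s01 := a01.symm; have s12 := a12.symm; have s23 := a23.symm
    have s34 := a34.symm; have s45 := a45.symm
    have t0 := b0.symm; have t1 := b1.symm; have t2 := b2.symm
    have t3 := b3.symm; have t4 := b4.symm; have t5 := b5.symm
    fin_cases a <;> fin_cases b <;>
      simp_all [e0, e1, e2, e3, e4, e5, e6]


/-- In an `H₇`-free graph, if `u*` is adjacent to each vertex of a copy of
`K₅ − e` on `{u₁,…,u₅}` (with the missing edge `u₄u₅`), then any outside vertex adjacent to
one of `u₁,u₂,u₃` has exactly one neighbor in `{u₁,u₂,u₃}` and none in `{u₄,u₅}`. -/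
theorem h7_free_k5e_outside_nbrs {V : Type} [DecidableEq V]
    (G : SimpleGraph V) [DecidableRel G.Adj] (hfree : H7Free G)
    (ustar u1 u2 u3 u4 u5 : V)
    (hdistinct : ({ustar, u1, u2, u3, u4, u5} : Finset V).card = 6)
    (hstar : ∀ u ∈ ({u1, u2, u3, u4, u5} : Finset V), G.Adj ustar u)
    (h12 : G.Adj u1 u2) (h13 : G.Adj u1 u3) (h14 : G.Adj u1 u4) (h15 : G.Adj u1 u5)
    (h23 : G.Adj u2 u3) (h24 : G.Adj u2 u4) (h25 : G.Adj u2 u5)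
    (h34 : G.Adj u3 u4) (h35 : G.Adj u3 u5) (h45 : ¬ G.Adj u4 u5)
    (w : V) (hw : w ∉ ({ustar, u1, u2, u3, u4, u5} : Finset V))
    (hadj : G.Adj w u1 ∨ G.Adj w u2 ∨ G.Adj w u3) :
    (({u1, u2, u3} : Finset V).filter (fun u => G.Adj w u)).card = 1 ∧
      ¬ G.Adj w u4 ∧ ¬ G.Adj w u5 := by
  -- distinctness facts
  have t2' : ({u4, u5} : Finset V).card ≤ 2 :=
    (Finset.card_insert_le _ _).trans (by simp)
  have t3' : ({u3, u4, u5} : Finset V).card ≤ 3 :=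
    (Finset.card_insert_le _ _).trans (Nat.add_le_add_right t2' 1)
  have t4' : ({u2, u3, u4, u5} : Finset V).card ≤ 4 :=
    (Finset.card_insert_le _ _).trans (Nat.add_le_add_right t3' 1)
  have t5' : ({u1, u2, u3, u4, u5} : Finset V).card ≤ 5 :=
    (Finset.card_insert_le _ _).trans (Nat.add_le_add_right t4' 1)
  have e0 : ustar ∉ ({u1, u2, u3, u4, u5} : Finset V) := by
    intro hm; rw [Finset.card_insert_of_mem hm] at hdistinct; omega
  have hc5 : ({u1, u2, u3, u4, u5} : Finset V).card = 5 := by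
    rw [Finset.card_insert_of_notMem e0] at hdistinct; omega
  have e1 : u1 ∉ ({u2, u3, u4, u5} : Finset V) := by
    intro hm; rw [Finset.card_insert_of_mem hm] at hc5; omega
  have hc4 : ({u2, u3, u4, u5} : Finset V).card = 4 := by
    rw [Finset.card_insert_of_notMem e1] at hc5; omega
  have e2 : u2 ∉ ({u3, u4, u5} : Finset V) := by
    intro hm; rw [Finset.card_insert_of_mem hm] at hc4; omega
  have hc3 : ({u3, u4, u5} : Finset V).card = 3 := by
    rw [Finset.card_insert_of_notMem e2] at hc4; omega
  have e3 : u3 ∉ ({u4, u5} : Finset V) := by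
    intro hm; rw [Finset.card_insert_of_mem hm] at hc3; omega
  have hc2 : ({u4, u5} : Finset V).card = 2 := by
    rw [Finset.card_insert_of_notMem e3] at hc3; omega
  have e4 : u4 ∉ ({u5} : Finset V) := by
    intro hm; rw [Finset.card_insert_of_mem hm] at hc2; simp at hc2
  simp only [Finset.mem_insert, Finset.mem_singleton, not_or] at e0 e1 e2 e3 e4 hw
  obtain ⟨d01, d02, d03, d04, d05⟩ := e0
  obtain ⟨d12, d13, d14, d15⟩ := e1
  obtain ⟨d23, d24, d25⟩ := e2
  obtain ⟨d34, d35⟩ := e3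
  have d45 : u4 ≠ u5 := e4
  obtain ⟨w0, w1, w2, w3, w4, w5⟩ := hw
  have s1 : G.Adj ustar u1 := hstar u1 (by simp)
  have s2 : G.Adj ustar u2 := hstar u2 (by simp)
  have s3 : G.Adj ustar u3 := hstar u3 (by simp)
  have s4 : G.Adj ustar u4 := hstar u4 (by simp)
  have s5 : G.Adj ustar u5 := hstar u5 (by simp)
  -- no neighbor u4
  have hw4 : ¬ G.Adj w u4 := by
    intro h4
    rcases hadj with h1 | h2 | h3
    · exact hfree (fan_of G u1 w u4 u2 u5 u3 ustar
        h4 h24.symm h25 h35.symm s3.symm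
        h1.symm h14 h12 h15 h13 s1.symm
        w2 w5 w3 w0 d45 (Ne.symm d34) (Ne.symm d04) d23 (Ne.symm d02) (Ne.symm d05))
    · exact hfree (fan_of G u2 w u4 u1 u5 u3 ustar
        h4 h14.symm h15 h35.symm s3.symm
        h2.symm h24 h12.symm h25 h23 s2.symm
        w1 w5 w3 w0 d45 (Ne.symm d34) (Ne.symm d04) d13 (Ne.symm d01) (Ne.symm d05))
    · exact hfree (fan_of G u3 w u4 u1 u5 u2 ustar
        h4 h14.symm h15 h25.symm s2.symm
        h3.symm h34 h13.symm h35 h23.symm s3.symm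
        w1 w5 w2 w0 d45 (Ne.symm d24) (Ne.symm d04) d12 (Ne.symm d01) (Ne.symm d05))
  -- no neighbor u5
  have hw5 : ¬ G.Adj w u5 := by
    intro h5
    rcases hadj with h1 | h2 | h3
    · exact hfree (fan_of G u1 w u5 u2 u4 u3 ustar
        h5 h25.symm h24 h34.symm s3.symm
        h1.symm h15 h12 h14 h13 s1.symm
        w2 w4 w3 w0 (Ne.symm d45) (Ne.symm d35) (Ne.symm d05) d23 (Ne.symm d02) (Ne.symm d04))
    · exact hfree (fan_of G u2 w u5 u1 u4 u3 ustar
        h5 h15.symm h14 h34.symm s3.symm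
        h2.symm h25 h12.symm h24 h23 s2.symm
        w1 w4 w3 w0 (Ne.symm d45) (Ne.symm d35) (Ne.symm d05) d13 (Ne.symm d01) (Ne.symm d04))
    · exact hfree (fan_of G u3 w u5 u1 u4 u2 ustar
        h5 h15.symm h14 h24.symm s2.symm
        h3.symm h35 h13.symm h34 h23.symm s3.symm
        w1 w4 w2 w0 (Ne.symm d45) (Ne.symm d25) (Ne.symm d05) d12 (Ne.symm d01) (Ne.symm d04))
  -- at most one among u1,u2,u3
  have not12 : ¬ (G.Adj w u1 ∧ G.Adj w u2) := by
    rintro ⟨ha, hb⟩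
    exact hfree (fan_of G u1 w u2 u4 u3 u5 ustar
      hb h24 h34.symm h35 s5.symm
      ha.symm h12 h14 h13 h15 s1.symm
      w4 w3 w5 w0 d23 d25 (Ne.symm d02) d45 (Ne.symm d04) (Ne.symm d03))
  have not13 : ¬ (G.Adj w u1 ∧ G.Adj w u3) := by
    rintro ⟨ha, hc⟩
    exact hfree (fan_of G u1 w u3 u4 u2 u5 ustar
      hc h34 h24.symm h25 s5.symm
      ha.symm h13 h14 h12 h15 s1.symm
      w4 w2 w5 w0 (Ne.symm d23) d35 (Ne.symm d03) d45 (Ne.symm d04) (Ne.symm d02))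
  have not23 : ¬ (G.Adj w u2 ∧ G.Adj w u3) := by
    rintro ⟨hb, hc⟩
    exact hfree (fan_of G u2 w u3 u4 u1 u5 ustar
      hc h34 h14.symm h15 s5.symm
      hb.symm h23 h24 h12.symm h25 s2.symm
      w4 w1 w5 w0 (Ne.symm d13) d35 (Ne.symm d03) d45 (Ne.symm d04) (Ne.symm d01))
  refine ⟨?_, hw4, hw5⟩
  rcases hadj with h1 | h2 | h3
  · have nb : ¬ G.Adj w u2 := fun hb => not12 ⟨h1, hb⟩
    have nc : ¬ G.Adj w u3 := fun hc => not13 ⟨h1, hc⟩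
    simp [Finset.filter_insert, Finset.filter_singleton, h1, nb, nc]
  · have na : ¬ G.Adj w u1 := fun ha => not12 ⟨ha, h2⟩
    have nc : ¬ G.Adj w u3 := fun hc => not23 ⟨h2, hc⟩
    simp [Finset.filter_insert, Finset.filter_singleton, h2, na, nc]
  · have na : ¬ G.Adj w u1 := fun ha => not13 ⟨ha, h3⟩
    have nb : ¬ G.Adj w u2 := fun hb => not23 ⟨hb, h3⟩
    simp [Finset.filter_insert, Finset.filter_singleton, h3, na, nb]
end

section
/- Let G be a connected finite simple graph with m ≥ 33 edges, x a Perron vector of G, and u* a vertex at which x attains its maximum. Set A = N(u*), A_0 = {u ∈ A : u has no neighbor in A}, and A_+ = A \ A_0. If ρ(G) ≥ 1 + √(m − 2), then e(A_+) ≥ 11. -/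
open Matrix Finset

/-- For a connected graph `G` with `m ≥ 33` edges, a Perron vector `x`
maximized at `u*`, `A = N(u*)` and `A₊` the vertices of `A` with a neighbor in `A`:
if `ρ(G) ≥ 1 + √(m − 2)`, then `e(A₊) ≥ 11`. -/
theorem edges_Aplus_ge_eleven (m : ℕ) (hm : 33 ≤ m)
    {V : Type} [Fintype V] [DecidableEq V] (G : SimpleGraph V) [DecidableRel G.Adj]
    (hconn : G.Connected) (hsize : G.edgeFinset.card = m)
    (x : V → ℝ) (hpos : ∀ v, 0 < x v) (heig : G.adjMatrix ℝ *ᵥ x = specRad G • x)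
    (ustar : V) (hmax : ∀ v, x v ≤ x ustar)
    (A Aplus : Finset V)
    (hA : A = G.neighborFinset ustar)
    (hAplus : Aplus = A.filter (fun u => ∃ w ∈ A, G.Adj u w))
    (hrho : 1 + Real.sqrt ((m : ℝ) - 2) ≤ specRad G) :
    11 ≤ edgesIn G (Aplus : Set V) := by
  classical
  set ρ := specRad G with hρdef
  have hx : 0 < x ustar := hpos ustar
  set F : Finset (Sym2 V) := G.edgeFinset.filter (fun e => ∀ v ∈ e, v ∈ A) with hF
  -- ρ² x(u*) equals the double sum
  have h2 : G.adjMatrix ℝ *ᵥ (G.adjMatrix ℝ *ᵥ x) = (ρ ^ 2) • x := by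
    rw [heig, Matrix.mulVec_smul, heig, smul_smul, sq]
  have hLHS : ρ ^ 2 * x ustar = ∑ v ∈ A, ∑ w ∈ G.neighborFinset v, x w := by
    have h := congrFun h2 ustar
    rw [Pi.smul_apply, smul_eq_mul] at h
    rw [← h, SimpleGraph.adjMatrix_mulVec_apply, hA]
    exact Finset.sum_congr rfl fun v _ => by
      rw [SimpleGraph.adjMatrix_mulVec_apply]
  have hD : ρ ^ 2 * x ustar ≤ (∑ v ∈ A, (G.degree v : ℝ)) * x ustar := by
    rw [hLHS, Finset.sum_mul]
    refine Finset.sum_le_sum fun v _ => ?_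
    calc ∑ w ∈ G.neighborFinset v, x w
        ≤ ∑ _w ∈ G.neighborFinset v, x ustar :=
          Finset.sum_le_sum fun w _ => hmax w
      _ = (G.degree v : ℝ) * x ustar := by
          rw [Finset.sum_const, SimpleGraph.card_neighborFinset_eq_degree,
            nsmul_eq_mul]
  have hρD : ρ ^ 2 ≤ ∑ v ∈ A, (G.degree v : ℝ) := le_of_mul_le_mul_right hD hx
  -- counting bound
  have hcount : ∑ v ∈ A, G.degree v ≤ m + F.card := by
    have h1 : ∀ v : V, G.degree v = (G.edgeFinset.filter (fun e => v ∈ e)).card := by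
      intro v
      rw [← SimpleGraph.card_incidenceFinset_eq_degree,
        SimpleGraph.incidenceFinset_eq_filter]
    have hswap : ∑ v ∈ A, G.degree v
        = ∑ e ∈ G.edgeFinset, (A.filter (fun v => v ∈ e)).card := by
      simp only [h1, Finset.card_filter]
      rw [Finset.sum_comm]
    have hc2 : ∀ e : Sym2 V, (A.filter (fun v => v ∈ e)).card ≤ 2 := by
      intro e
      induction e using Sym2.ind with
      | _ a b =>
        have hsub : A.filter (fun v => v ∈ s(a, b)) ⊆ {a, b} := by
          intro v hv
          simp only [Finset.mem_filter, Sym2.mem_iff] at hv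
          simp only [Finset.mem_insert, Finset.mem_singleton]
          exact hv.2
        calc (A.filter (fun v => v ∈ s(a, b))).card ≤ ({a, b} : Finset V).card :=
              Finset.card_le_card hsub
          _ ≤ 2 := Finset.card_insert_le a {b}
    have hc1 : ∀ e ∈ G.edgeFinset.filter (fun e => ¬ ∀ v ∈ e, v ∈ A),
        (A.filter (fun v => v ∈ e)).card ≤ 1 := by
      intro e he
      simp only [Finset.mem_filter] at he
      obtain ⟨-, hnot⟩ := he
      push_neg at hnot
      obtain ⟨w, hwe, hwA⟩ := hnot
      induction e using Sym2.ind with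
      | _ a b =>
        rcases Sym2.mem_iff.mp hwe with rfl | rfl
        · have hsub : A.filter (fun v => v ∈ s(w, b)) ⊆ {b} := by
            intro v hv
            simp only [Finset.mem_filter, Sym2.mem_iff] at hv
            rcases hv.2 with rfl | rfl
            · exact absurd hv.1 hwA
            · simp
          calc _ ≤ ({b} : Finset V).card := Finset.card_le_card hsub
            _ = 1 := Finset.card_singleton b
        · have hsub : A.filter (fun v => v ∈ s(a, w)) ⊆ {a} := by
            intro v hv
            simp only [Finset.mem_filter, Sym2.mem_iff] at hv
            rcases hv.2 with rfl | rfl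
            · simp
            · exact absurd hv.1 hwA
          calc _ ≤ ({a} : Finset V).card := Finset.card_le_card hsub
            _ = 1 := Finset.card_singleton a
    have hsplit := Finset.sum_filter_add_sum_filter_not G.edgeFinset
      (fun e => ∀ v ∈ e, v ∈ A) (fun e => (A.filter (fun v => v ∈ e)).card)
    have hcards : F.card + (G.edgeFinset.filter (fun e => ¬ ∀ v ∈ e, v ∈ A)).card = m := by
      rw [hF, Finset.card_filter_add_card_filter_not, hsize]
    have hb1 : ∑ e ∈ F, (A.filter (fun v => v ∈ e)).card ≤ 2 * F.card := by
      calc ∑ e ∈ F, (A.filter (fun v => v ∈ e)).card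
          ≤ ∑ _e ∈ F, 2 := Finset.sum_le_sum fun e _ => hc2 e
        _ = 2 * F.card := by rw [Finset.sum_const]; ring
    have hb2 : ∑ e ∈ G.edgeFinset.filter (fun e => ¬ ∀ v ∈ e, v ∈ A),
        (A.filter (fun v => v ∈ e)).card
        ≤ (G.edgeFinset.filter (fun e => ¬ ∀ v ∈ e, v ∈ A)).card := by
      calc _ ≤ ∑ _e ∈ G.edgeFinset.filter (fun e => ¬ ∀ v ∈ e, v ∈ A), 1 :=
            Finset.sum_le_sum hc1
        _ = _ := by rw [Finset.sum_const, smul_eq_mul, mul_one]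
    rw [← hF] at hsplit
    rw [hswap, ← hsplit]
    omega
  -- arithmetic
  set s := Real.sqrt ((m : ℝ) - 2) with hs
  have hmR : (33 : ℝ) ≤ (m : ℝ) := by exact_mod_cast hm
  have hs2 : s ^ 2 = (m : ℝ) - 2 := Real.sq_sqrt (by linarith)
  have hs0 : 0 ≤ s := Real.sqrt_nonneg _
  have h31 : (5.5 : ℝ) < s := by
    have : (5.5 : ℝ) = Real.sqrt (5.5 ^ 2) := (Real.sqrt_sq (by norm_num)).symm
    rw [this]
    exact Real.sqrt_lt_sqrt (by norm_num) (by norm_num; linarith)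
  have hρ2 : (m : ℝ) - 1 + 2 * s ≤ ρ ^ 2 := by
    nlinarith [hrho, hs0]
  have hsum_cast : (∑ v ∈ A, (G.degree v : ℝ)) ≤ (m : ℝ) + (F.card : ℝ) := by
    have : ((∑ v ∈ A, G.degree v : ℕ) : ℝ) ≤ ((m + F.card : ℕ) : ℝ) := by
      exact_mod_cast hcount
    simpa using this
  have hF11 : 11 ≤ F.card := by
    have h10 : (10 : ℝ) < (F.card : ℝ) := by nlinarith
    exact_mod_cast Nat.lt_iff_add_one_le.mp (by exact_mod_cast h10)
  -- e(A₊) counts at least the edges of F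
  have hedges : edgesIn G (Aplus : Set V)
      = (G.edgeFinset.filter (fun e => ∀ v ∈ e, v ∈ Aplus)).card := by
    rw [edgesIn, ← Set.ncard_coe_finset]
    congr 1
    ext e
    simp [Set.mem_setOf_eq, SimpleGraph.mem_edgeFinset]
  have hsub : F ⊆ G.edgeFinset.filter (fun e => ∀ v ∈ e, v ∈ Aplus) := by
    intro e he
    rw [hF, Finset.mem_filter] at he
    obtain ⟨heE, hall⟩ := he
    rw [Finset.mem_filter]
    refine ⟨heE, ?_⟩
    induction e using Sym2.ind with
    | _ a b =>
      have hadj : G.Adj a b := by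
        rwa [SimpleGraph.mem_edgeFinset, SimpleGraph.mem_edgeSet] at heE
      have haA : a ∈ A := hall a (Sym2.mem_mk_left a b)
      have hbA : b ∈ A := hall b (Sym2.mem_mk_right a b)
      intro v hv
      rw [hAplus, Finset.mem_filter]
      rcases Sym2.mem_iff.mp hv with rfl | rfl
      · exact ⟨haA, ⟨b, hbA, hadj⟩⟩
      · exact ⟨hbA, ⟨a, haA, hadj.symm⟩⟩
  calc (11 : ℕ) ≤ F.card := hF11
    _ ≤ _ := Finset.card_le_card hsub
    _ = edgesIn G (Aplus : Set V) := hedges.symm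
end
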